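/- Let I ⊆ ℝ be an open interval and F, f : I → ℝ. Then F is an indefinite MC^1 integral of f on I if and only if F is an indefinite Perron integral of f on I. -/

import Mathlib

open Filter Set Topology MeasureTheory

/-- `φ` is an `α`-control function for the pair `(F, f)` on the interval `I`:
`φ` is strictly increasing on `I` and for every `x ∈ I`,
`(F y - F x - f x (y - x)) / (φ (x + α (y - x)) - φ x) → 0` as `y → x` within `I \ {x}`. -/
def IsControlFn (α : ℝ) (I : Set ℝ) (F f φ : ℝ → ℝ) : Prop :=
  StrictMonoOn φ I ∧ ∀ x ∈ I,
    Tendsto (fun y => (F y - F x - f x * (y - x)) / (φ (x + α * (y - x)) - φ x))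
      (𝓝[I \ {x}] x) (𝓝 0)

/-- `F` is an indefinite `MC^α` integral of `f` on `I`. -/
def IsMCIntegral (α : ℝ) (I : Set ℝ) (F f : ℝ → ℝ) : Prop :=
  ∃ φ : ℝ → ℝ, IsControlFn α I F f φ
/-- `F` is an indefinite Perron integral of `f` on `I`: for every `ε > 0` and every
compact interval `Icc c d ⊆ I` there are a majorant `U` and a minorant `V` (in the sense
of Dini derivates, with values in the extended reals) that are `ε`-close to `F` on `Icc c d`. -/
def IsPerronIntegral (I : Set ℝ) (F f : ℝ → ℝ) : Prop :=
  ∀ ε > (0 : ℝ), ∀ c d : ℝ, Set.Icc c d ⊆ I →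
    ∃ U V : ℝ → ℝ,
      (∀ x ∈ I, (f x : EReal) ≤
        Filter.liminf (fun y => (((U y - U x) / (y - x) : ℝ) : EReal)) (𝓝[I \ {x}] x)) ∧
      (∀ x ∈ I,
        Filter.limsup (fun y => (((V y - V x) / (y - x) : ℝ) : EReal)) (𝓝[I \ {x}] x)
          ≤ (f x : EReal)) ∧
      ∀ x ∈ Set.Icc c d, |U x - F x| + |V x - F x| < ε


lemma mono_of_dini {I : Set ℝ} (hI : I.OrdConnected) {h : ℝ → ℝ}
    (H : ∀ x ∈ I, ∀ ε > (0:ℝ), ∀ᶠ y in 𝓝[I \ {x}] x, -ε < (h y - h x) / (y - x)) :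
    MonotoneOn h I := by
  intro a ha b hb hab
  rcases eq_or_lt_of_le hab with rfl | hab
  · exact le_refl _
  have hIcc : Icc a b ⊆ I := hI.out ha hb
  have key : ∀ ε > (0:ℝ), h a ≤ h b + ε * (b - a) := by
    intro ε hε
    set S := {t : ℝ | t ∈ Icc a b ∧ h a ≤ h t + ε * (t - a)} with hSdef
    have haS : a ∈ S := ⟨⟨le_refl _, hab.le⟩, by simp⟩
    have hbdd : BddAbove S := ⟨b, fun t ht => ht.1.2⟩
    set s := sSup S with hs
    have hsmem : s ∈ Icc a b := ⟨le_csSup hbdd haS, csSup_le ⟨a, haS⟩ fun t ht => ht.1.2⟩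
    have hsI : s ∈ I := hIcc hsmem
    obtain ⟨δ, hδ, hδ'⟩ : ∃ δ > 0, ∀ y ∈ I \ {s}, |y - s| < δ →
        -ε < (h y - h s) / (y - s) := by
      have := H s hsI ε hε
      rw [eventually_nhdsWithin_iff, Metric.eventually_nhds_iff] at this
      obtain ⟨δ, hδ, Hd⟩ := this
      exact ⟨δ, hδ, fun y hy hyd => Hd (by rwa [Real.dist_eq]) hy⟩
    have hsS : s ∈ S := by
      rcases eq_or_lt_of_le hsmem.1 with heq | hlt
      · rw [← heq]; exact haS
      · obtain ⟨t, htS, htgt⟩ := exists_lt_of_lt_csSup ⟨a, haS⟩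
          (show s - min δ (s - a) < s by
            have : 0 < min δ (s - a) := lt_min hδ (by linarith)
            linarith)
        have hts : t ≤ s := le_csSup hbdd htS
        rcases eq_or_lt_of_le hts with rfl | hts'
        · exact htS
        · have htI : t ∈ I := hIcc htS.1
          have habs : |t - s| < δ := by
            rw [abs_sub_lt_iff]
            constructor
            · linarith
            · have : s - min δ (s - a) < t := htgt
              have h1 : min δ (s - a) ≤ δ := min_le_left _ _
              linarith
          have := hδ' t ⟨htI, fun hts0 => absurd (Set.mem_singleton_iff.mp hts0) hts'.ne⟩ habs
          have hlt0 : t - s < 0 := by linarith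
          have hmul : h t - h s < -ε * (t - s) :=
            (lt_div_iff_of_neg hlt0).mp this
          have := htS.2
          constructor
          · exact hsmem
          · nlinarith [htS.1.1]
    rcases eq_or_lt_of_le hsmem.2 with heq | hlt
    · have := hsS.2; rw [heq] at this; exact this
    · exfalso
      set y := min b (s + δ / 2) with hy
      have hys : s < y := lt_min hlt (by linarith)
      have hyb : y ≤ b := min_le_left _ _
      have hyI : y ∈ I := hIcc ⟨le_trans hsmem.1 hys.le, hyb⟩
      have habs : |y - s| < δ := by
        rw [abs_sub_lt_iff]
        constructor
        · have : y ≤ s + δ / 2 := min_le_right _ _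
          linarith
        · linarith
      have := hδ' y ⟨hyI, fun h0 => absurd (Set.mem_singleton_iff.mp h0) hys.ne'⟩ habs
      have hmul : -ε * (y - s) < h y - h s :=
        (lt_div_iff₀ (by linarith : (0:ℝ) < y - s)).mp this
      have hyS : y ∈ S := by
        refine ⟨⟨le_trans hsmem.1 hys.le, hyb⟩, ?_⟩
        have := hsS.2
        nlinarith [hsmem.1]
      exact absurd (le_csSup hbdd hyS) (not_le.mpr hys)
  by_contra hc
  push_neg at hc
  have := key ((h a - h b) / (2 * (b - a))) (div_pos (by linarith) (by linarith))
  have heq : (h a - h b) / (2 * (b - a)) * (b - a) = (h a - h b) / 2 := by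
    rw [div_mul_eq_mul_div, mul_comm 2 (b - a), ← div_div, mul_div_assoc,
      div_self (show b - a ≠ 0 by linarith), mul_one]
  rw [heq] at this
  linarith

lemma mono_UV {I : Set ℝ} (hI : I.OrdConnected) {f U V : ℝ → ℝ}
    (hU : ∀ x ∈ I, (f x : EReal) ≤
      Filter.liminf (fun y => (((U y - U x) / (y - x) : ℝ) : EReal)) (𝓝[I \ {x}] x))
    (hV : ∀ x ∈ I,
      Filter.limsup (fun y => (((V y - V x) / (y - x) : ℝ) : EReal)) (𝓝[I \ {x}] x)
        ≤ (f x : EReal)) :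
    MonotoneOn (fun t => U t - V t) I := by
  apply mono_of_dini hI
  intro x hx ε hε
  have e1 : ∀ᶠ y in 𝓝[I \ {x}] x,
      ((f x - ε / 2 : ℝ) : EReal) < (((U y - U x) / (y - x) : ℝ) : EReal) :=
    eventually_lt_of_lt_liminf
      (lt_of_lt_of_le (by exact_mod_cast sub_lt_self (f x) (by linarith)) (hU x hx))
  have e2 : ∀ᶠ y in 𝓝[I \ {x}] x,
      (((V y - V x) / (y - x) : ℝ) : EReal) < ((f x + ε / 2 : ℝ) : EReal) :=
    eventually_lt_of_limsup_lt
      (lt_of_le_of_lt (hV x hx) (by exact_mod_cast lt_add_of_pos_right (f x) (by linarith)))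
  filter_upwards [e1, e2] with y h1 h2
  rw [EReal.coe_lt_coe_iff] at h1 h2
  have hnum : (U y - V y - (U x - V x)) / (y - x)
      = (U y - U x) / (y - x) - (V y - V x) / (y - x) := by
    rw [← sub_div]; ring_nf
  rw [hnum]
  linarith

lemma nebot_diff {I : Set ℝ} (hIopen : IsOpen I) {x : ℝ} (hx : x ∈ I) :
    (𝓝[I \ {x}] x).NeBot := by
  have h : I \ {x} = {x}ᶜ ∩ I := by ext t; simp [and_comm]
  rw [h, ← nhdsWithin_restrict' _ (hIopen.mem_nhds hx)]
  exact inferInstance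

lemma mc_to_perron {I : Set ℝ} (hIopen : IsOpen I) {F f φ : ℝ → ℝ}
    (hmono : StrictMonoOn φ I)
    (hctrl : ∀ x ∈ I, Filter.Tendsto
      (fun y => (F y - F x - f x * (y - x)) / (φ y - φ x)) (𝓝[I \ {x}] x) (𝓝 0)) :
    IsPerronIntegral I F f := by
  intro ε hε c d hcd
  set η : ℝ := ε / (2 * (|φ c| + |φ d| + 1)) with hη
  have hηpos : 0 < η := by positivity
  refine ⟨fun t => F t + η * φ t, fun t => F t - η * φ t, ?_, ?_, ?_⟩
  · intro x hx
    have hne := nebot_diff hIopen hx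
    have hev : ∀ᶠ y in 𝓝[I \ {x}] x,
        (f x : EReal) ≤ (((F y + η * φ y - (F x + η * φ x)) / (y - x) : ℝ) : EReal) := by
      have h1 : ∀ᶠ y in 𝓝[I \ {x}] x,
          |(F y - F x - f x * (y - x)) / (φ y - φ x)| < η / 2 := by
        have h0 := (Metric.tendsto_nhds.mp (hctrl x hx)) (η / 2) (by positivity)
        filter_upwards [h0] with y hy
        rwa [Real.dist_eq, sub_zero] at hy
      filter_upwards [h1, eventually_mem_nhdsWithin] with y hy hymem
      obtain ⟨hyI, hyne⟩ := hymem
      have hyne' : y ≠ x := fun hc => hyne (by simp [hc])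
      have hD : φ y - φ x ≠ 0 := by
        rcases lt_or_gt_of_ne hyne' with h | h
        · exact ne_of_lt (by linarith [hmono hyI hx h])
        · exact ne_of_gt (by linarith [hmono hx hyI h])
      have habs : |F y - F x - f x * (y - x)| ≤ η / 2 * |φ y - φ x| := by
        rw [abs_div] at hy
        have := (div_lt_iff₀ (abs_pos.mpr hD)).mp hy
        linarith
      rw [EReal.coe_le_coe_iff]
      have key : 0 ≤ (F y - F x - f x * (y - x) + η * (φ y - φ x)) / (y - x) := by
        rcases lt_or_gt_of_ne hyne' with h | h
        · have hDneg : φ y - φ x < 0 := by linarith [hmono hyI hx h]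
          apply div_nonneg_of_nonpos _ (by linarith : y - x ≤ 0)
          have : |F y - F x - f x * (y - x)| ≤ η / 2 * (φ x - φ y) := by
            rwa [abs_of_neg hDneg, show -(φ y - φ x) = φ x - φ y by ring] at habs
          have h2 := abs_le.mp this
          nlinarith
        · have hDpos : 0 < φ y - φ x := by linarith [hmono hx hyI h]
          apply div_nonneg _ (by linarith)
          rw [abs_of_pos hDpos] at habs
          have h2 := abs_le.mp habs
          nlinarith
      have heq : (F y + η * φ y - (F x + η * φ x)) / (y - x)
          = f x + (F y - F x - f x * (y - x) + η * (φ y - φ x)) / (y - x) := by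
        field_simp [sub_ne_zero.mpr hyne']
        ring
      rw [heq]
      linarith
    calc (f x : EReal) = Filter.liminf (fun _ => (f x : EReal)) (𝓝[I \ {x}] x) :=
          (Filter.liminf_const _).symm
      _ ≤ _ := Filter.liminf_le_liminf hev
  · intro x hx
    have hne := nebot_diff hIopen hx
    have hev : ∀ᶠ y in 𝓝[I \ {x}] x,
        (((F y - η * φ y - (F x - η * φ x)) / (y - x) : ℝ) : EReal) ≤ (f x : EReal) := by
      have h1 : ∀ᶠ y in 𝓝[I \ {x}] x,
          |(F y - F x - f x * (y - x)) / (φ y - φ x)| < η / 2 := by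
        have h0 := (Metric.tendsto_nhds.mp (hctrl x hx)) (η / 2) (by positivity)
        filter_upwards [h0] with y hy
        rwa [Real.dist_eq, sub_zero] at hy
      filter_upwards [h1, eventually_mem_nhdsWithin] with y hy hymem
      obtain ⟨hyI, hyne⟩ := hymem
      have hyne' : y ≠ x := fun hc => hyne (by simp [hc])
      have hD : φ y - φ x ≠ 0 := by
        rcases lt_or_gt_of_ne hyne' with h | h
        · exact ne_of_lt (by linarith [hmono hyI hx h])
        · exact ne_of_gt (by linarith [hmono hx hyI h])
      have habs : |F y - F x - f x * (y - x)| ≤ η / 2 * |φ y - φ x| := by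
        rw [abs_div] at hy
        have := (div_lt_iff₀ (abs_pos.mpr hD)).mp hy
        linarith
      rw [EReal.coe_le_coe_iff]
      have key : (F y - F x - f x * (y - x) - η * (φ y - φ x)) / (y - x) ≤ 0 := by
        rcases lt_or_gt_of_ne hyne' with h | h
        · have hDneg : φ y - φ x < 0 := by linarith [hmono hyI hx h]
          apply div_nonpos_of_nonneg_of_nonpos _ (by linarith)
          · have : |F y - F x - f x * (y - x)| ≤ η / 2 * (φ x - φ y) := by
              rwa [abs_of_neg hDneg, show -(φ y - φ x) = φ x - φ y by ring] at habs
            have h2 := abs_le.mp this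
            nlinarith
        · have hDpos : 0 < φ y - φ x := by linarith [hmono hx hyI h]
          apply div_nonpos_of_nonpos_of_nonneg _ (by linarith)
          rw [abs_of_pos hDpos] at habs
          have h2 := abs_le.mp habs
          nlinarith
      have heq : (F y - η * φ y - (F x - η * φ x)) / (y - x)
          = f x + (F y - F x - f x * (y - x) - η * (φ y - φ x)) / (y - x) := by
        field_simp [sub_ne_zero.mpr hyne']
        ring
      rw [heq]
      linarith
    calc Filter.limsup _ _ ≤ Filter.limsup (fun _ => (f x : EReal)) (𝓝[I \ {x}] x) :=
          Filter.limsup_le_limsup hev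
      _ = (f x : EReal) := Filter.limsup_const _
  · intro x hxcd
    have hc : c ∈ Set.Icc c d := ⟨le_refl _, hxcd.1.trans hxcd.2⟩
    have hd : d ∈ Set.Icc c d := ⟨hxcd.1.trans hxcd.2, le_refl _⟩
    have h1 : φ c ≤ φ x := hmono.monotoneOn (hcd hc) (hcd hxcd) hxcd.1
    have h2 : φ x ≤ φ d := hmono.monotoneOn (hcd hxcd) (hcd hd) hxcd.2
    have hφx : |φ x| ≤ |φ c| + |φ d| := by
      rw [abs_le]
      constructor
      · have := neg_abs_le (φ c); have := abs_nonneg (φ d); linarith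
      · have := le_abs_self (φ d); have := abs_nonneg (φ c); linarith
    have heq : |F x + η * φ x - F x| + |F x - η * φ x - F x| = 2 * (η * |φ x|) := by
      rw [show F x + η * φ x - F x = η * φ x by ring, show F x - η * φ x - F x = -(η * φ x) by ring,
        abs_neg, abs_mul, abs_of_pos hηpos]
      ring
    show |F x + η * φ x - F x| + |F x - η * φ x - F x| < ε
    rw [heq]
    have : 2 * (η * |φ x|) ≤ 2 * η * (|φ c| + |φ d|) := by nlinarith
    have hfin : 2 * η * (|φ c| + |φ d|) < ε := by
      have hkey : 2 * η * (|φ c| + |φ d| + 1) = ε := by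
        rw [hη]
        field_simp
      nlinarith [hηpos]
    linarith


lemma perron_control {I : Set ℝ} (hIopen : IsOpen I) {F f : ℝ → ℝ}
    (U V : ℚ × ℚ × ℕ → ℝ → ℝ) (εe : ℚ × ℚ × ℕ → ℝ) (σ : ℚ × ℚ × ℕ → ℝ → ℝ) (φ : ℝ → ℝ)
    (hεebd : ∀ e : ℚ × ℚ × ℕ, εe e ≤ (1/2 : ℝ)^e.2.2)
    (h1 : ∀ e : ℚ × ℚ × ℕ, Set.Icc (e.1 : ℝ) (e.2.1 : ℝ) ⊆ I → ∀ x ∈ I, (f x : EReal) ≤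
      Filter.liminf (fun y => (((U e y - U e x) / (y - x) : ℝ) : EReal)) (𝓝[I \ {x}] x))
    (h2 : ∀ e : ℚ × ℚ × ℕ, Set.Icc (e.1 : ℝ) (e.2.1 : ℝ) ⊆ I → ∀ x ∈ I,
      Filter.limsup (fun y => (((V e y - V e x) / (y - x) : ℝ) : EReal)) (𝓝[I \ {x}] x)
        ≤ (f x : EReal))
    (h3 : ∀ e : ℚ × ℚ × ℕ, Set.Icc (e.1 : ℝ) (e.2.1 : ℝ) ⊆ I →
      ∀ t ∈ Set.Icc (e.1 : ℝ) (e.2.1 : ℝ), |U e t - F t| + |V e t - F t| < εe e)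
    (hmUV : ∀ e e' : ℚ × ℚ × ℕ, Set.Icc (e.1 : ℝ) (e.2.1 : ℝ) ⊆ I →
      Set.Icc (e'.1 : ℝ) (e'.2.1 : ℝ) ⊆ I → MonotoneOn (fun t => U e t - V e' t) I)
    (hσeq : ∀ e : ℚ × ℚ × ℕ, Set.Icc (e.1 : ℝ) (e.2.1 : ℝ) ⊆ I →
      ∀ t ∈ Set.Icc (e.1 : ℝ) (e.2.1 : ℝ), σ e t = U e t - V e t)
    (hφstrict : StrictMonoOn φ I)
    (hgap : ∀ a ∈ I, ∀ b ∈ I, a ≤ b → b - a ≤ φ b - φ a)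
    (hterm : ∀ e : ℚ × ℚ × ℕ, ∀ a ∈ I, ∀ b ∈ I, a ≤ b →
      (2:ℝ)^e.2.2 * (σ e b - σ e a) ≤ φ b - φ a) :
    ∀ x ∈ I, Filter.Tendsto
      (fun y => (F y - F x - f x * (y - x)) / (φ (x + 1 * (y - x)) - φ x))
      (𝓝[I \ {x}] x) (𝓝 0) := by
  intro x hx
  have hfun : (fun y => (F y - F x - f x * (y - x)) / (φ (x + 1 * (y - x)) - φ x))
      = fun y => (F y - F x - f x * (y - x)) / (φ y - φ x) := by
    funext y
    have : x + 1 * (y - x) = y := by ring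
    rw [this]
  rw [hfun, Metric.tendsto_nhds]
  intro ε hε
  set δ : ℝ := ε / 5 with hδ
  have hδpos : 0 < δ := by positivity
  obtain ⟨ρ, hρpos, hball⟩ := Metric.isOpen_iff.mp hIopen x hx
  obtain ⟨q, hq1, hq2⟩ := exists_rat_btwn (show x - ρ/2 < x by linarith)
  obtain ⟨r, hr1, hr2⟩ := exists_rat_btwn (show x < x + ρ/2 by linarith)
  have hgood : Set.Icc ((q:ℝ)) ((r:ℝ)) ⊆ I := by
    intro t ht
    apply hball
    rw [Metric.mem_ball, Real.dist_eq, abs_sub_lt_iff]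
    constructor
    · linarith [ht.2]
    · linarith [ht.1]
  have hxqr : x ∈ Set.Icc ((q:ℝ)) ((r:ℝ)) := ⟨hq2.le, hr1.le⟩
  obtain ⟨k, hk⟩ := exists_pow_lt_of_lt_one hδpos (show (1/2:ℝ) < 1 by norm_num)
  have ev3' : ∀ᶠ y in 𝓝[I \ {x}] x,
      ((f x - δ : ℝ) : EReal) < (((U (q,r,k) y - U (q,r,k) x) / (y - x) : ℝ) : EReal) :=
    eventually_lt_of_lt_liminf
      (lt_of_lt_of_le (by exact_mod_cast sub_lt_self (f x) hδpos) (h1 (q,r,k) hgood x hx))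
  have ev4' : ∀ᶠ y in 𝓝[I \ {x}] x,
      (((V (q,r,k) y - V (q,r,k) x) / (y - x) : ℝ) : EReal) < ((f x + δ : ℝ) : EReal) :=
    eventually_lt_of_limsup_lt
      (lt_of_le_of_lt (h2 (q,r,k) hgood x hx)
        (by exact_mod_cast lt_add_of_pos_right (f x) hδpos))
  have ev2 : ∀ᶠ y in 𝓝[I \ {x}] x, y ∈ Set.Ioo ((q:ℝ)) ((r:ℝ)) :=
    eventually_of_mem (nhdsWithin_le_nhds (Ioo_mem_nhds hq2 hr1)) (fun y hy => hy)
  filter_upwards [eventually_mem_nhdsWithin, ev2, ev3', ev4'] with y hy1 hy2 hy3 hy4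
  rw [Real.dist_eq, sub_zero]
  obtain ⟨hyI, hyne0⟩ := hy1
  have hyne : y ≠ x := by simpa using hyne0
  have hyqr : y ∈ Set.Icc ((q:ℝ)) ((r:ℝ)) := ⟨hy2.1.le, hy2.2.le⟩
  rw [EReal.coe_lt_coe_iff] at hy3 hy4
  have hεebd' : ∀ m : ℕ, εe (q,r,m) ≤ (1/2:ℝ)^m := fun m => hεebd (q,r,m)
  rcases lt_or_gt_of_ne hyne with hxy | hxy
  · -- y < x
    have hDneg : φ y - φ x < 0 := sub_neg.mpr (hφstrict hyI hx hxy)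
    have habsD : |φ y - φ x| = φ x - φ y := by rw [abs_of_neg hDneg]; ring
    obtain ⟨m, hm⟩ := exists_pow_lt_of_lt_one
      (show (0:ℝ) < min δ (δ * (φ x - φ y) / 2) from
        lt_min hδpos (by apply div_pos (mul_pos hδpos (by linarith)); norm_num))
      (show (1/2:ℝ) < 1 by norm_num)
    have hm1 : (1/2:ℝ)^m ≤ δ := le_of_lt (lt_of_lt_of_le hm (min_le_left _ _))
    have hm2 : 2 * εe (q,r,m) ≤ δ * (φ x - φ y) := by
      have := lt_of_lt_of_le hm (min_le_right _ _)
      linarith [hεebd' m]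
    have hsneg : y - x < 0 := by linarith
    have hU : U (q,r,k) y - U (q,r,k) x < f x * (y - x) - δ * (y - x) := by
      have h0 := (lt_div_iff_of_neg hsneg).mp hy3
      have hexp : (f x - δ) * (y - x) = f x * (y - x) - δ * (y - x) := by ring
      linarith
    have hV : f x * (y - x) + δ * (y - x) < V (q,r,k) y - V (q,r,k) x := by
      have h0 := (div_lt_iff_of_neg hsneg).mp hy4
      have hexp : (f x + δ) * (y - x) = f x * (y - x) + δ * (y - x) := by ring
      linarith
    have hx3 := h3 (q,r,m) hgood x hxqr
    have hy3' := h3 (q,r,m) hgood y hyqr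
    have aUx1 := le_abs_self (U (q,r,m) x - F x)
    have aUx2 := neg_abs_le (U (q,r,m) x - F x)
    have aVx1 := le_abs_self (V (q,r,m) x - F x)
    have aVx2 := neg_abs_le (V (q,r,m) x - F x)
    have aUy1 := le_abs_self (U (q,r,m) y - F y)
    have aUy2 := neg_abs_le (U (q,r,m) y - F y)
    have aVy1 := le_abs_self (V (q,r,m) y - F y)
    have aVy2 := neg_abs_le (V (q,r,m) y - F y)
    have nUx := abs_nonneg (U (q,r,m) x - F x)
    have nVx := abs_nonneg (V (q,r,m) x - F x)
    have nUy := abs_nonneg (U (q,r,m) y - F y)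
    have nVy := abs_nonneg (V (q,r,m) y - F y)
    have hmo1 : U (q,r,k) y - V (q,r,m) y ≤ U (q,r,k) x - V (q,r,m) x :=
      hmUV (q,r,k) (q,r,m) hgood hgood hyI hx hxy.le
    have hmo2 : U (q,r,m) y - V (q,r,k) y ≤ U (q,r,m) x - V (q,r,k) x :=
      hmUV (q,r,m) (q,r,k) hgood hgood hyI hx hxy.le
    have hσex := hσeq (q,r,m) hgood x hxqr
    have hσey := hσeq (q,r,m) hgood y hyqr
    have hσekx := hσeq (q,r,k) hgood x hxqr
    have hσeky := hσeq (q,r,k) hgood y hyqr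
    have hpowm : (1/2:ℝ)^m * (2:ℝ)^m = 1 := by rw [← mul_pow]; norm_num
    have hpowk : (1/2:ℝ)^k * (2:ℝ)^k = 1 := by rw [← mul_pow]; norm_num
    have htm : (U (q,r,m) x - V (q,r,m) x) - (U (q,r,m) y - V (q,r,m) y)
        ≤ δ * (φ x - φ y) := by
      have h0 := hterm (q,r,m) y hyI x hx hxy.le
      rw [hσex, hσey] at h0
      have h1' := mul_le_mul_of_nonneg_left h0
        (le_of_lt (pow_pos (by norm_num : (0:ℝ) < 1/2) m))
      rw [← mul_assoc, hpowm, one_mul] at h1'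
      calc (U (q,r,m) x - V (q,r,m) x) - (U (q,r,m) y - V (q,r,m) y)
          ≤ (1/2:ℝ)^m * (φ x - φ y) := by linarith
        _ ≤ δ * (φ x - φ y) := mul_le_mul_of_nonneg_right hm1 (by linarith)
    have htk : (U (q,r,k) x - V (q,r,k) x) - (U (q,r,k) y - V (q,r,k) y)
        ≤ δ * (φ x - φ y) := by
      have h0 := hterm (q,r,k) y hyI x hx hxy.le
      rw [hσekx, hσeky] at h0
      have h1' := mul_le_mul_of_nonneg_left h0
        (le_of_lt (pow_pos (by norm_num : (0:ℝ) < 1/2) k))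
      rw [← mul_assoc, hpowk, one_mul] at h1'
      calc (U (q,r,k) x - V (q,r,k) x) - (U (q,r,k) y - V (q,r,k) y)
          ≤ (1/2:ℝ)^k * (φ x - φ y) := by linarith
        _ ≤ δ * (φ x - φ y) := mul_le_mul_of_nonneg_right hk.le (by linarith)
    have hgap' : x - y ≤ φ x - φ y := by
      have := hgap y hyI x hx hxy.le; linarith
    have hδgap : δ * (x - y) ≤ δ * (φ x - φ y) :=
      mul_le_mul_of_nonneg_left hgap' hδpos.le
    have habsN : |F y - F x - f x * (y - x)| ≤ 4 * (δ * (φ x - φ y)) := by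
      rw [abs_le]
      constructor
      · linarith [hV, hδgap, aUy1, aUx2, nVy, nVx, hx3, hy3', hm2, htm, hmo1, htk]
      · linarith [hU, hδgap, aVy2, aVx1, nUy, nUx, hx3, hy3', hm2, htm, hmo2, htk]
    rw [abs_div, habsD, div_lt_iff₀ (by linarith : (0:ℝ) < φ x - φ y)]
    have h45 : 4 * (δ * (φ x - φ y)) < ε * (φ x - φ y) := by
      have h46 : 4 * δ < ε := by rw [hδ]; linarith
      have := mul_lt_mul_of_pos_right h46 (show (0:ℝ) < φ x - φ y by linarith)
      linarith
    linarith
  · -- x < y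
    have hDpos : 0 < φ y - φ x := sub_pos.mpr (hφstrict hx hyI hxy)
    have habsD : |φ y - φ x| = φ y - φ x := abs_of_pos hDpos
    obtain ⟨m, hm⟩ := exists_pow_lt_of_lt_one
      (show (0:ℝ) < min δ (δ * (φ y - φ x) / 2) from
        lt_min hδpos (by apply div_pos (mul_pos hδpos (by linarith)); norm_num))
      (show (1/2:ℝ) < 1 by norm_num)
    have hm1 : (1/2:ℝ)^m ≤ δ := le_of_lt (lt_of_lt_of_le hm (min_le_left _ _))
    have hm2 : 2 * εe (q,r,m) ≤ δ * (φ y - φ x) := by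
      have := lt_of_lt_of_le hm (min_le_right _ _)
      linarith [hεebd' m]
    have hspos : 0 < y - x := by linarith
    have hU : f x * (y - x) - δ * (y - x) < U (q,r,k) y - U (q,r,k) x := by
      have h0 := (lt_div_iff₀ hspos).mp hy3
      have hexp : (f x - δ) * (y - x) = f x * (y - x) - δ * (y - x) := by ring
      linarith
    have hV : V (q,r,k) y - V (q,r,k) x < f x * (y - x) + δ * (y - x) := by
      have h0 := (div_lt_iff₀ hspos).mp hy4
      have hexp : (f x + δ) * (y - x) = f x * (y - x) + δ * (y - x) := by ring
      linarith
    have hx3 := h3 (q,r,m) hgood x hxqr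
    have hy3' := h3 (q,r,m) hgood y hyqr
    have aUx1 := le_abs_self (U (q,r,m) x - F x)
    have aUx2 := neg_abs_le (U (q,r,m) x - F x)
    have aVx1 := le_abs_self (V (q,r,m) x - F x)
    have aVx2 := neg_abs_le (V (q,r,m) x - F x)
    have aUy1 := le_abs_self (U (q,r,m) y - F y)
    have aUy2 := neg_abs_le (U (q,r,m) y - F y)
    have aVy1 := le_abs_self (V (q,r,m) y - F y)
    have aVy2 := neg_abs_le (V (q,r,m) y - F y)
    have nUx := abs_nonneg (U (q,r,m) x - F x)
    have nVx := abs_nonneg (V (q,r,m) x - F x)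
    have nUy := abs_nonneg (U (q,r,m) y - F y)
    have nVy := abs_nonneg (V (q,r,m) y - F y)
    have hmo1 : U (q,r,k) x - V (q,r,m) x ≤ U (q,r,k) y - V (q,r,m) y :=
      hmUV (q,r,k) (q,r,m) hgood hgood hx hyI hxy.le
    have hmo2 : U (q,r,m) x - V (q,r,k) x ≤ U (q,r,m) y - V (q,r,k) y :=
      hmUV (q,r,m) (q,r,k) hgood hgood hx hyI hxy.le
    have hσex := hσeq (q,r,m) hgood x hxqr
    have hσey := hσeq (q,r,m) hgood y hyqr
    have hσekx := hσeq (q,r,k) hgood x hxqr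
    have hσeky := hσeq (q,r,k) hgood y hyqr
    have hpowm : (1/2:ℝ)^m * (2:ℝ)^m = 1 := by rw [← mul_pow]; norm_num
    have hpowk : (1/2:ℝ)^k * (2:ℝ)^k = 1 := by rw [← mul_pow]; norm_num
    have htm : (U (q,r,m) y - V (q,r,m) y) - (U (q,r,m) x - V (q,r,m) x)
        ≤ δ * (φ y - φ x) := by
      have h0 := hterm (q,r,m) x hx y hyI hxy.le
      rw [hσex, hσey] at h0
      have h1' := mul_le_mul_of_nonneg_left h0
        (le_of_lt (pow_pos (by norm_num : (0:ℝ) < 1/2) m))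
      rw [← mul_assoc, hpowm, one_mul] at h1'
      calc (U (q,r,m) y - V (q,r,m) y) - (U (q,r,m) x - V (q,r,m) x)
          ≤ (1/2:ℝ)^m * (φ y - φ x) := by linarith
        _ ≤ δ * (φ y - φ x) := mul_le_mul_of_nonneg_right hm1 (by linarith)
    have htk : (U (q,r,k) y - V (q,r,k) y) - (U (q,r,k) x - V (q,r,k) x)
        ≤ δ * (φ y - φ x) := by
      have h0 := hterm (q,r,k) x hx y hyI hxy.le
      rw [hσekx, hσeky] at h0
      have h1' := mul_le_mul_of_nonneg_left h0
        (le_of_lt (pow_pos (by norm_num : (0:ℝ) < 1/2) k))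
      rw [← mul_assoc, hpowk, one_mul] at h1'
      calc (U (q,r,k) y - V (q,r,k) y) - (U (q,r,k) x - V (q,r,k) x)
          ≤ (1/2:ℝ)^k * (φ y - φ x) := by linarith
        _ ≤ δ * (φ y - φ x) := mul_le_mul_of_nonneg_right hk.le (by linarith)
    have hgap' : y - x ≤ φ y - φ x := hgap x hx y hyI hxy.le
    have hδgap : δ * (y - x) ≤ δ * (φ y - φ x) :=
      mul_le_mul_of_nonneg_left hgap' hδpos.le
    have habsN : |F y - F x - f x * (y - x)| ≤ 4 * (δ * (φ y - φ x)) := by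
      rw [abs_le]
      constructor
      · linarith [hU, hδgap, aVy1, aVx2, nUx, nUy, hx3, hy3', hm2, htm, hmo2, htk]
      · linarith [hV, hδgap, aUy2, aUx1, nVx, nVy, hx3, hy3', hm2, htm, hmo1, htk]
    rw [abs_div, habsD, div_lt_iff₀ hDpos]
    have h45 : 4 * (δ * (φ y - φ x)) < ε * (φ y - φ x) := by
      have h46 : 4 * δ < ε := by rw [hδ]; linarith
      have := mul_lt_mul_of_pos_right h46 hDpos
      linarith
    linarith

lemma perron_to_mc {I : Set ℝ} (hIopen : IsOpen I) (hIconn : I.OrdConnected)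
    {F f : ℝ → ℝ} (hP : IsPerronIntegral I F f) : IsMCIntegral 1 I F f := by
  classical
  set εe : ℚ × ℚ × ℕ → ℝ := fun e => (1/4 : ℝ)^e.2.2 * (1/2 : ℝ)^(Encodable.encode e) with hεe
  have hεepos : ∀ e, 0 < εe e := fun e => by positivity
  have H : ∀ e : ℚ × ℚ × ℕ, Set.Icc (e.1 : ℝ) (e.2.1 : ℝ) ⊆ I → ∃ U V : ℝ → ℝ,
      (∀ x ∈ I, (f x : EReal) ≤
        Filter.liminf (fun y => (((U y - U x) / (y - x) : ℝ) : EReal)) (𝓝[I \ {x}] x)) ∧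
      (∀ x ∈ I,
        Filter.limsup (fun y => (((V y - V x) / (y - x) : ℝ) : EReal)) (𝓝[I \ {x}] x)
          ≤ (f x : EReal)) ∧
      ∀ x ∈ Set.Icc (e.1 : ℝ) (e.2.1 : ℝ), |U x - F x| + |V x - F x| < εe e :=
    fun e he => hP (εe e) (hεepos e) _ _ he
  choose! U V h1 h2 h3 using H
  have hmUV : ∀ e e', Set.Icc (e.1 : ℝ) (e.2.1 : ℝ) ⊆ I → Set.Icc (e'.1 : ℝ) (e'.2.1 : ℝ) ⊆ I →
      MonotoneOn (fun t => U e t - V e' t) I :=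
    fun e e' he he' => mono_UV hIconn (h1 e he) (h2 e' he')
  set σ : (ℚ × ℚ × ℕ) → ℝ → ℝ := fun e t =>
    if Set.Icc (e.1 : ℝ) (e.2.1 : ℝ) ⊆ I then max (-(εe e)) (min (εe e) (U e t - V e t)) else 0
    with hσ
  have hσbd : ∀ e t, |σ e t| ≤ εe e := by
    intro e t
    rw [abs_le, hσ]
    by_cases he : Set.Icc (e.1 : ℝ) (e.2.1 : ℝ) ⊆ I
    · simp only [if_pos he]
      exact ⟨le_max_left _ _, max_le (by linarith [hεepos e]) (min_le_left _ _)⟩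
    · simp only [if_neg he]
      constructor <;> linarith [hεepos e]
  have hσmono : ∀ e, MonotoneOn (σ e) I := by
    intro e a ha b hb hab
    rw [hσ]
    by_cases he : Set.Icc (e.1 : ℝ) (e.2.1 : ℝ) ⊆ I
    · simp only [if_pos he]
      exact max_le_max (le_refl _) (min_le_min (le_refl _) (hmUV e e he he ha hb hab))
    · simp only [if_neg he]
      exact le_refl _
  have hσeq : ∀ e, Set.Icc (e.1 : ℝ) (e.2.1 : ℝ) ⊆ I →
      ∀ t ∈ Set.Icc (e.1 : ℝ) (e.2.1 : ℝ), σ e t = U e t - V e t := by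
    intro e he t ht
    have h3t := h3 e he t ht
    have l1 := le_abs_self (U e t - F t)
    have l2 := le_abs_self (V e t - F t)
    have l3 := neg_abs_le (U e t - F t)
    have l4 := neg_abs_le (V e t - F t)
    rw [hσ]
    simp only [if_pos he]
    rw [min_eq_right (by linarith), max_eq_right (by linarith)]
  set Sm : (ℚ × ℚ × ℕ) → ℝ → ℝ := fun e t => (2:ℝ)^e.2.2 * σ e t with hSm
  have hsumg : Summable ((fun n => (1/2 : ℝ)^n) ∘ Encodable.encode (α := ℚ × ℚ × ℕ)) :=
    (summable_geometric_of_lt_one (by norm_num) (by norm_num)).comp_injective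
      Encodable.encode_injective
  have hSmbd : ∀ e t, |Sm e t| ≤ (1/2 : ℝ)^(Encodable.encode e) := by
    intro e t
    rw [hSm]
    simp only []
    rw [abs_mul, abs_of_pos (by positivity : (0:ℝ) < (2:ℝ)^e.2.2)]
    calc (2:ℝ)^e.2.2 * |σ e t| ≤ (2:ℝ)^e.2.2 * εe e :=
          mul_le_mul_of_nonneg_left (hσbd e t) (by positivity)
      _ = (1/2 : ℝ)^e.2.2 * (1/2 : ℝ)^(Encodable.encode e) := by
          rw [hεe]
          have h24 : (2:ℝ)^e.2.2 * (1/4 : ℝ)^e.2.2 = (1/2 : ℝ)^e.2.2 := by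
            rw [← mul_pow]; norm_num
          rw [← mul_assoc, h24]
      _ ≤ 1 * (1/2 : ℝ)^(Encodable.encode e) := by
          apply mul_le_mul_of_nonneg_right _ (by positivity)
          exact pow_le_one₀ (by norm_num) (by norm_num)
      _ = (1/2 : ℝ)^(Encodable.encode e) := one_mul _
  have hsum : ∀ t, Summable (fun e => Sm e t) := by
    intro t
    exact Summable.of_norm_bounded hsumg (fun e => hSmbd e t)
  set φ : ℝ → ℝ := fun t => t + ∑' e, Sm e t with hφ
  have hSmono : ∀ a ∈ I, ∀ b ∈ I, a ≤ b → ∀ e, Sm e a ≤ Sm e b := by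
    intro a ha b hb hab e
    exact mul_le_mul_of_nonneg_left (hσmono e ha hb hab) (by positivity)
  have htsum_mono : ∀ a ∈ I, ∀ b ∈ I, a ≤ b → (∑' e, Sm e a) ≤ ∑' e, Sm e b :=
    fun a ha b hb hab => Summable.tsum_le_tsum (hSmono a ha b hb hab) (hsum a) (hsum b)
  have hφstrict : StrictMonoOn φ I := by
    intro a ha b hb hab
    have := htsum_mono a ha b hb hab.le
    rw [hφ]
    simp only []
    linarith
  have hgap : ∀ a ∈ I, ∀ b ∈ I, a ≤ b → b - a ≤ φ b - φ a := by
    intro a ha b hb hab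
    have := htsum_mono a ha b hb hab
    rw [hφ]; simp only []; linarith
  have hterm : ∀ e, ∀ a ∈ I, ∀ b ∈ I, a ≤ b →
      (2:ℝ)^e.2.2 * (σ e b - σ e a) ≤ φ b - φ a := by
    intro e a ha b hb hab
    have hsub : (∑' e', Sm e' b) - (∑' e', Sm e' a) = ∑' e', (Sm e' b - Sm e' a) :=
      (Summable.tsum_sub (hsum b) (hsum a)).symm
    have hle : Sm e b - Sm e a ≤ ∑' e', (Sm e' b - Sm e' a) := by
      apply Summable.le_tsum ((hsum b).sub (hsum a))
      intro j _
      have := hSmono a ha b hb hab j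
      linarith
    have hrw : Sm e b - Sm e a = (2:ℝ)^e.2.2 * (σ e b - σ e a) := by
      simp only [hSm]; ring
    rw [hφ]
    simp only []
    rw [hrw] at hle
    linarith [hle, hsub]
  have hεebd : ∀ e : ℚ × ℚ × ℕ, εe e ≤ (1/2 : ℝ)^e.2.2 := by
    intro e
    rw [hεe]
    calc (1/4:ℝ)^e.2.2 * (1/2:ℝ)^(Encodable.encode e)
        ≤ (1/4:ℝ)^e.2.2 * 1 :=
          mul_le_mul_of_nonneg_left (pow_le_one₀ (by norm_num) (by norm_num)) (by positivity)
      _ = (1/4:ℝ)^e.2.2 := mul_one _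
      _ ≤ (1/2:ℝ)^e.2.2 := pow_le_pow_left₀ (by norm_num) (by norm_num) e.2.2
  exact ⟨φ, hφstrict, perron_control hIopen U V εe σ φ hεebd h1 h2 h3 hmUV hσeq hφstrict hgap hterm⟩

/-- Bendová–Malý: the `MC^1` integral coincides with the Perron integral. -/
theorem stmt_13 (I : Set ℝ) (hIopen : IsOpen I) (hIconn : I.OrdConnected)
    (F f : ℝ → ℝ) :
    IsMCIntegral 1 I F f ↔ IsPerronIntegral I F f := by
  constructor
  · rintro ⟨φ, hmono, hctrl⟩
    apply mc_to_perron hIopen hmono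
    intro x hx
    have h0 := hctrl x hx
    have hfun : (fun y => (F y - F x - f x * (y - x)) / (φ (x + 1 * (y - x)) - φ x))
        = fun y => (F y - F x - f x * (y - x)) / (φ y - φ x) := by
      funext y
      have h : x + 1 * (y - x) = y := by ring
      rw [h]
    rwa [hfun] at h0
  · exact perron_to_mc hIopen hIconn
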